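/- There exists a constant M > 0 such that for every continuously differentiable, compactly supported function φ : ℝ² → ℝ one has ‖φ‖_{L⁴(ℝ²)} ≤ M ‖φ‖_{L²(ℝ²)}^{1/2} ( ‖φ‖_{L²(ℝ²)}² + ‖∇φ‖_{L²(ℝ²)}² )^{1/4}, i.e. ‖φ‖_{L⁴} ≤ M ‖φ‖_{L²}^{1/2} ‖φ‖_{H¹}^{1/2} where ‖φ‖_{H¹} := (‖φ‖_{L²}² + ‖∇φ‖_{L²}²)^{1/2}. -/

import Mathlib

open MeasureTheory ENNReal

private lemma gn_aux (K a b c : ℝ) (hK : 0 ≤ K) (ha : 0 ≤ a) (hb : 0 ≤ b) (hc : 0 ≤ c)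
    (h : a ^ 2 ≤ K * (b * c)) :
    a ≤ (Real.sqrt K + 1) * b ^ ((1:ℝ)/2) * (b ^ 2 + c ^ 2) ^ ((1:ℝ)/4) := by
  set M := Real.sqrt K + 1 with hM
  have hM0 : 0 < M := by positivity
  have hKM : K ≤ M ^ 2 := by
    nlinarith [Real.sq_sqrt hK, Real.sqrt_nonneg K]
  have hbc : b ^ 2 + c ^ 2 ≥ 0 := by positivity
  have hhalf : ((b:ℝ) ^ (1/2:ℝ)) ^ 2 = b := by
    rw [← Real.rpow_natCast (b ^ (1/2:ℝ)) 2, ← Real.rpow_mul hb]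
    norm_num
  have hhalfc : ((c:ℝ) ^ (1/2:ℝ)) ^ 2 = c := by
    rw [← Real.rpow_natCast (c ^ (1/2:ℝ)) 2, ← Real.rpow_mul hc]
    norm_num
  have step1 : a ≤ M * b ^ (1/2:ℝ) * c ^ (1/2:ℝ) := by
    have ht : (0:ℝ) ≤ M * b ^ (1/2:ℝ) * c ^ (1/2:ℝ) := by positivity
    have hsq : a ^ 2 ≤ (M * b ^ (1/2:ℝ) * c ^ (1/2:ℝ)) ^ 2 := by
      have : (M * b ^ (1/2:ℝ) * c ^ (1/2:ℝ)) ^ 2 = M ^ 2 * (b * c) := by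
        rw [mul_pow, mul_pow, hhalf, hhalfc]; ring
      rw [this]
      calc a ^ 2 ≤ K * (b * c) := h
        _ ≤ M ^ 2 * (b * c) := by
          apply mul_le_mul_of_nonneg_right hKM (by positivity)
    exact (pow_le_pow_iff_left₀ ha ht two_ne_zero).mp hsq
  have step2 : c ^ (1/2:ℝ) ≤ (b ^ 2 + c ^ 2) ^ ((1:ℝ)/4) := by
    have hc' : c ≤ (b ^ 2 + c ^ 2) ^ (1/2:ℝ) := by
      have h1 : c = (c ^ 2 : ℝ) ^ (1/2:ℝ) := by
        rw [← Real.rpow_natCast c 2, ← Real.rpow_mul hc]; norm_num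
      rw [h1]
      exact Real.rpow_le_rpow (by positivity) (by nlinarith [sq_nonneg b]) (by norm_num)
    calc c ^ (1/2:ℝ) ≤ ((b ^ 2 + c ^ 2) ^ (1/2:ℝ)) ^ (1/2:ℝ) :=
          Real.rpow_le_rpow hc hc' (by norm_num)
      _ = (b ^ 2 + c ^ 2) ^ ((1:ℝ)/4) := by
          rw [← Real.rpow_mul hbc]; norm_num
  calc a ≤ M * b ^ (1/2:ℝ) * c ^ (1/2:ℝ) := step1
    _ ≤ M * b ^ (1/2:ℝ) * (b ^ 2 + c ^ 2) ^ ((1:ℝ)/4) := by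
        apply mul_le_mul_of_nonneg_left step2 (by positivity)

/-- **Gagliardo–Nirenberg (Ladyzhenskaya) inequality in ℝ².**
There is a constant `M > 0` such that every `C¹` compactly supported
`φ : ℝ² → ℝ` satisfies `‖φ‖_{L⁴} ≤ M ‖φ‖_{L²}^{1/2} ‖φ‖_{H¹}^{1/2}`,
where `‖φ‖_{H¹} = (‖φ‖_{L²}² + ‖∇φ‖_{L²}²)^{1/2}`. -/
theorem gagliardo_nirenberg_dim_two :
    ∃ M : ℝ, 0 < M ∧
      ∀ φ : EuclideanSpace ℝ (Fin 2) → ℝ,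
        ContDiff ℝ 1 φ → HasCompactSupport φ →
        (eLpNorm φ 4 volume).toReal ≤
          M * ((eLpNorm φ 2 volume).toReal) ^ ((1 : ℝ)/2) *
            (((eLpNorm φ 2 volume).toReal) ^ 2 +
              ((eLpNorm (fun x => ‖fderiv ℝ φ x‖) 2 volume).toReal) ^ 2) ^ ((1 : ℝ)/4) := by
  set μ : Measure (EuclideanSpace ℝ (Fin 2)) := volume
  set C : NNReal := eLpNormLESNormFDerivOneConst μ 2 with hC
  refine ⟨Real.sqrt (2 * (C:ℝ)) + 1, by positivity, ?_⟩
  intro φ hφ h2φ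
  -- notation
  have hconj : NNReal.HolderConjugate (Module.finrank ℝ (EuclideanSpace ℝ (Fin 2))) 2 := by
    refine ⟨?_, by simp, by norm_num⟩
    rw [← NNReal.coe_inj]; push_cast; norm_num
  have hdφcont : Continuous (fderiv ℝ φ) := (hφ.fderiv_right (m := 0) le_rfl).continuous
  have hdφsupp : HasCompactSupport (fderiv ℝ φ) := (h2φ.fderiv (𝕜 := ℝ))
  -- memℒp facts
  have hmem2 : MemLp φ 2 μ := hφ.continuous.memLp_of_hasCompactSupport h2φ
  have hmem4 : MemLp φ 4 μ := hφ.continuous.memLp_of_hasCompactSupport h2φ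
  have hmemd : MemLp (fderiv ℝ φ) 2 μ := hdφcont.memLp_of_hasCompactSupport hdφsupp
  -- Sobolev for φ²
  have key : eLpNorm (fun x => φ x * φ x) 2 μ ≤
      C * eLpNorm (fderiv ℝ (fun x => φ x * φ x)) 1 μ :=
    eLpNorm_le_eLpNorm_fderiv_one μ (hφ.mul hφ) h2φ.mul_right hconj
  -- left side = (‖φ‖₄)²
  have hleft : eLpNorm (fun x => φ x * φ x) 2 μ = eLpNorm φ 4 μ ^ (2:ℝ) := by
    have h1 : (fun x => φ x * φ x) = fun x => ‖φ x‖ ^ (2:ℝ) := by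
      funext x
      rw [show (2:ℝ) = ((2:ℕ):ℝ) by norm_num, Real.rpow_natCast]
      rw [Real.norm_eq_abs, sq_abs]; ring
    rw [h1, eLpNorm_norm_rpow φ (by norm_num : (0:ℝ) < 2)]
    norm_num
  -- derivative of φ²
  have hderiv : (fderiv ℝ (fun x => φ x * φ x)) =
      fun x => (2 * φ x) • fderiv ℝ φ x := by
    funext x
    have hd : DifferentiableAt ℝ φ x := hφ.differentiable one_ne_zero x
    rw [fderiv_fun_mul hd hd]
    ext y
    simp [two_mul]
    ring
  -- Hölder
  have hhold : eLpNorm (fderiv ℝ (fun x => φ x * φ x)) 1 μ ≤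
      (2 : ℝ≥0∞) * eLpNorm φ 2 μ * eLpNorm (fderiv ℝ φ) 2 μ := by
    rw [hderiv]
    have h1 : (fun x => (2 * φ x) • fderiv ℝ φ x) =
        (fun x => (2:ℝ) * φ x) • (fderiv ℝ φ) := rfl
    rw [h1]
    have h2 := eLpNorm_smul_le_mul_eLpNorm (p := 2) (q := 2) (r := 1)
      hmemd.aestronglyMeasurable ((continuous_const.mul hφ.continuous : Continuous fun x => (2:ℝ) * φ x)).aestronglyMeasurable
      (hpqr := ⟨by rw [ENNReal.inv_two_add_inv_two, inv_one]⟩)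
    refine h2.trans ?_
    have h3 : eLpNorm (fun x => (2:ℝ) * φ x) 2 μ = (2 : ℝ≥0∞) * eLpNorm φ 2 μ := by
      have : (fun x => (2:ℝ) * φ x) = (2:ℝ) • φ := by funext x; simp
      rw [this, eLpNorm_const_smul]
      simp [enorm]
    rw [show ((fun _ => (2:ℝ)) * φ) = (fun x => (2:ℝ) * φ x) from rfl, h3]
  -- combine in ℝ≥0∞
  have main : eLpNorm φ 4 μ ^ (2:ℝ) ≤
      (C : ℝ≥0∞) * ((2 : ℝ≥0∞) * eLpNorm φ 2 μ * eLpNorm (fderiv ℝ φ) 2 μ) := by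
    rw [← hleft]
    exact key.trans (mul_le_mul_right hhold _)
  -- pass to reals
  set a := (eLpNorm φ 4 μ).toReal
  set b := (eLpNorm φ 2 μ).toReal
  set c := (eLpNorm (fderiv ℝ φ) 2 μ).toReal
  have hb4 : eLpNorm φ 4 μ ≠ ⊤ := hmem4.eLpNorm_lt_top.ne
  have hb2 : eLpNorm φ 2 μ ≠ ⊤ := hmem2.eLpNorm_lt_top.ne
  have hbd : eLpNorm (fderiv ℝ φ) 2 μ ≠ ⊤ := hmemd.eLpNorm_lt_top.ne
  have hreal : a ^ 2 ≤ (2 * (C:ℝ)) * (b * c) := by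
    have hfin : (C : ℝ≥0∞) * ((2 : ℝ≥0∞) * eLpNorm φ 2 μ * eLpNorm (fderiv ℝ φ) 2 μ) ≠ ⊤ := by
      apply ENNReal.mul_ne_top ENNReal.coe_ne_top
      exact ENNReal.mul_ne_top (ENNReal.mul_ne_top (by norm_num) hb2) hbd
    have := ENNReal.toReal_mono hfin main
    rw [← ENNReal.toReal_rpow] at this
    rw [ENNReal.toReal_mul, ENNReal.toReal_mul, ENNReal.toReal_mul] at this
    simp only [ENNReal.coe_toReal, ENNReal.toReal_ofNat] at this
    calc a ^ 2 = a ^ (2:ℝ) := by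
          rw [← Real.rpow_natCast a 2]; norm_num
      _ ≤ (C:ℝ) * (2 * b * c) := this
      _ = (2 * (C:ℝ)) * (b * c) := by ring
  have hfnorm : eLpNorm (fun x => ‖fderiv ℝ φ x‖) 2 μ = eLpNorm (fderiv ℝ φ) 2 μ :=
    eLpNorm_norm (fderiv ℝ φ)
  rw [hfnorm]
  exact gn_aux (2 * (C:ℝ)) a b c (by positivity) ENNReal.toReal_nonneg
    ENNReal.toReal_nonneg ENNReal.toReal_nonneg hreal
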